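/- The A₁-type Macdonald polynomial M_n(x; q, t) is an eigenfunction of the Macdonald q-difference operator: if D f(x) = ((t x − t⁻¹ x⁻¹)/(x − x⁻¹))·f(qx) + ((t⁻¹ x − t x⁻¹)/(x − x⁻¹))·f(q⁻¹x), then D M_n(·; q, t)(x) = (t q^n + t⁻¹ q^{−n})·M_n(x; q, t). -/

import Mathlib

/-- The finite q-Pochhammer symbol `(a;q)_n = ∏_{j=0}^{n-1} (1 − a q^j)`. -/
noncomputable def qPoch (a q : ℂ) (n : ℕ) : ℂ := ∏ j ∈ Finset.range n, (1 - a * q ^ j)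

/-- The `A₁`-type Macdonald polynomial. -/
noncomputable def macdonaldA1 (n : ℕ) (x q t : ℂ) : ℂ :=
  qPoch (q ^ 2) (q ^ 2) n / qPoch (t ^ 2) (q ^ 2) n *
    ∑ j ∈ Finset.range (n + 1),
      qPoch (t ^ 2) (q ^ 2) j * qPoch (t ^ 2) (q ^ 2) (n - j) /
          (qPoch (q ^ 2) (q ^ 2) j * qPoch (q ^ 2) (q ^ 2) (n - j)) *
        x ^ ((j : ℤ) - ((n : ℤ) - (j : ℤ)))

lemma qPoch_succ (a q : ℂ) (m : ℕ) :
    qPoch a q (m+1) = qPoch a q m * (1 - a * q ^ m) := Finset.prod_range_succ _ _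

/-- Coefficient of the Macdonald polynomial. -/
noncomputable def mC (n j : ℕ) (q t : ℂ) : ℂ :=
  qPoch (t ^ 2) (q ^ 2) j * qPoch (t ^ 2) (q ^ 2) (n - j) /
    (qPoch (q ^ 2) (q ^ 2) j * qPoch (q ^ 2) (q ^ 2) (n - j))

noncomputable def mF (n j : ℕ) (q t : ℂ) : ℂ :=
  mC n j q t * (t * (q ^ (2*j) / q ^ n) + t⁻¹ * (q ^ n / q ^ (2*j)) -
    (t * q ^ n + t⁻¹ * (q ^ n)⁻¹))

noncomputable def mG (n j : ℕ) (q t : ℂ) : ℂ :=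
  mC n j q t * (t⁻¹ * (q ^ (2*j) / q ^ n) + t * (q ^ n / q ^ (2*j)) -
    (t * q ^ n + t⁻¹ * (q ^ n)⁻¹))

lemma key (q t : ℂ) (hq0 : q ≠ 0) (ht0 : t ≠ 0)
    (hqp : ∀ m : ℕ, qPoch (q ^ 2) (q ^ 2) m ≠ 0)
    (htp : ∀ m : ℕ, qPoch (t ^ 2) (q ^ 2) m ≠ 0)
    (n j : ℕ) (hj : j < n) : mF n j q t = mG n (j+1) q t := by
  obtain ⟨k, hk⟩ : ∃ k, n = j + k + 1 := ⟨n - j - 1, by omega⟩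
  subst hk
  have h1 : j + k + 1 - j = k + 1 := by omega
  have h2 : j + k + 1 - (j+1) = k := by omega
  unfold mF mG mC
  rw [h1, h2]
  have hQj := hqp j
  have hQk := hqp k
  have hQj1 := hqp (j+1)
  have hQk1 := hqp (k+1)
  have hqn : q ^ (j+k+1) ≠ 0 := pow_ne_zero _ hq0
  have hq2j : q ^ (2*j) ≠ 0 := pow_ne_zero _ hq0
  have hq2j1 : q ^ (2*(j+1)) ≠ 0 := pow_ne_zero _ hq0
  rw [div_mul_eq_mul_div, div_mul_eq_mul_div,
    div_eq_div_iff (mul_ne_zero hQj hQk1) (mul_ne_zero hQj1 hQk)]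
  rw [qPoch_succ (t^2) (q^2) k, qPoch_succ (q^2) (q^2) k, qPoch_succ (t^2) (q^2) j,
    qPoch_succ (q^2) (q^2) j]
  field_simp
  ring

lemma mF_last (n : ℕ) (q t : ℂ) (hq0 : q ≠ 0) (ht0 : t ≠ 0) : mF n n q t = 0 := by
  unfold mF
  have hqn : q ^ n ≠ 0 := pow_ne_zero _ hq0
  have h : t * (q ^ (2*n) / q ^ n) + t⁻¹ * (q ^ n / q ^ (2*n)) -
      (t * q ^ n + t⁻¹ * (q ^ n)⁻¹) = 0 := by
    rw [two_mul, pow_add]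
    field_simp
    ring
  rw [h, mul_zero]

lemma mG_zero (n : ℕ) (q t : ℂ) (hq0 : q ≠ 0) (ht0 : t ≠ 0) : mG n 0 q t = 0 := by
  unfold mG
  have hqn : q ^ n ≠ 0 := pow_ne_zero _ hq0
  have h : t⁻¹ * (q ^ (2*0) / q ^ n) + t * (q ^ n / q ^ (2*0)) -
      (t * q ^ n + t⁻¹ * (q ^ n)⁻¹) = 0 := by
    norm_num
    field_simp
    ring
  rw [h, mul_zero]

lemma zpowE (y : ℂ) (hy : y ≠ 0) (n j : ℕ) :
    y ^ ((j : ℤ) - ((n : ℤ) - (j : ℤ))) = y ^ (2*j) / y ^ n := by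
  have h : (j : ℤ) - ((n : ℤ) - (j : ℤ)) = ((2*j : ℕ) : ℤ) - ((n : ℕ) : ℤ) := by
    push_cast; ring
  rw [h, zpow_sub₀ hy, zpow_natCast, zpow_natCast]

/-- `M_n(x;q,t)` is an eigenfunction of the Macdonald q-difference operator
`D f(x) = ((t x − t⁻¹x⁻¹)/(x − x⁻¹)) f(qx) + ((t⁻¹x − t x⁻¹)/(x − x⁻¹)) f(q⁻¹x)`,
with eigenvalue `t q^n + t⁻¹ q^{−n}`. -/
theorem macdonaldA1_eigen (n : ℕ) (x q t : ℂ)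
    (hx0 : x ≠ 0) (hx1 : x ≠ 1) (hx2 : x ≠ -1) (hq0 : q ≠ 0) (ht0 : t ≠ 0)
    (hqp : ∀ m : ℕ, qPoch (q ^ 2) (q ^ 2) m ≠ 0)
    (htp : ∀ m : ℕ, qPoch (t ^ 2) (q ^ 2) m ≠ 0) :
    (t * x - t⁻¹ * x⁻¹) / (x - x⁻¹) * macdonaldA1 n (q * x) q t +
        (t⁻¹ * x - t * x⁻¹) / (x - x⁻¹) * macdonaldA1 n (q⁻¹ * x) q t =
      (t * q ^ n + t⁻¹ * (q ^ n)⁻¹) * macdonaldA1 n x q t := by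
  have hxx : x - x⁻¹ ≠ 0 := by
    intro h
    rw [sub_eq_zero] at h
    have h2 : x * x = 1 := by
      nth_rewrite 2 [h]
      exact mul_inv_cancel₀ hx0
    have h3 : (x - 1) * (x + 1) = 0 := by linear_combination h2
    rcases mul_eq_zero.mp h3 with h4 | h4
    · exact hx1 (by linear_combination h4)
    · exact hx2 (by linear_combination h4)
  have hqx : q * x ≠ 0 := mul_ne_zero hq0 hx0
  have hqix : q⁻¹ * x ≠ 0 := mul_ne_zero (inv_ne_zero hq0) hx0
  have hqn : q ^ n ≠ 0 := pow_ne_zero _ hq0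
  set e : ℕ → ℤ := fun j => (j : ℤ) - ((n : ℤ) - (j : ℤ)) with he
  have hmac : ∀ y : ℂ, macdonaldA1 n y q t =
      qPoch (q ^ 2) (q ^ 2) n / qPoch (t ^ 2) (q ^ 2) n *
        ∑ j ∈ Finset.range (n + 1), mC n j q t * y ^ e j := fun y => rfl
  rw [hmac, hmac, hmac]
  set K := qPoch (q ^ 2) (q ^ 2) n / qPoch (t ^ 2) (q ^ 2) n with hK
  -- the sum identity from which everything follows
  have hsum : ∑ j ∈ Finset.range (n+1), mF n j q t * (x ^ e j * x) =
      ∑ j ∈ Finset.range (n+1), mG n j q t * (x ^ e j * x⁻¹) := by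
    rw [Finset.sum_range_succ, mF_last n q t hq0 ht0,
      Finset.sum_range_succ' (fun j => mG n j q t * (x ^ e j * x⁻¹)) n,
      mG_zero n q t hq0 ht0]
    simp only [zero_mul, add_zero]
    refine Finset.sum_congr rfl fun j hj => ?_
    have hjn : j < n := Finset.mem_range.mp hj
    rw [key q t hq0 ht0 hqp htp n j hjn]
    congr 1
    have he2 : e (j+1) = e j + 2 := by simp only [he]; push_cast; ring
    rw [he2, zpow_add₀ hx0]
    have hz : x ^ (2:ℤ) = x * x := by
      rw [show (2:ℤ) = 1 + 1 by norm_num, zpow_add₀ hx0, zpow_one]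
    rw [hz]
    field_simp
  have main : (t * x - t⁻¹ * x⁻¹) / (x - x⁻¹) *
        (∑ j ∈ Finset.range (n+1), mC n j q t * (q * x) ^ e j) +
      (t⁻¹ * x - t * x⁻¹) / (x - x⁻¹) *
        (∑ j ∈ Finset.range (n+1), mC n j q t * (q⁻¹ * x) ^ e j) =
      (t * q ^ n + t⁻¹ * (q ^ n)⁻¹) *
        ∑ j ∈ Finset.range (n+1), mC n j q t * x ^ e j := by
    rw [div_mul_eq_mul_div, div_mul_eq_mul_div, ← add_div, div_eq_iff hxx]
    have hterm : ∀ j ∈ Finset.range (n+1),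
        (t * x - t⁻¹ * x⁻¹) * (mC n j q t * (q * x) ^ e j) +
          (t⁻¹ * x - t * x⁻¹) * (mC n j q t * (q⁻¹ * x) ^ e j) =
        (mF n j q t * (x ^ e j * x) - mG n j q t * (x ^ e j * x⁻¹)) +
          (t * q ^ n + t⁻¹ * (q ^ n)⁻¹) * (mC n j q t * x ^ e j) * (x - x⁻¹) := by
      intro j hj
      have h1 : (q * x) ^ e j = (q ^ (2*j) / q ^ n) * x ^ e j := by
        rw [mul_zpow, he]
        simp only []
        rw [zpowE q hq0 n j]
      have h2 : (q⁻¹ * x) ^ e j = (q ^ n / q ^ (2*j)) * x ^ e j := by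
        rw [mul_zpow, inv_zpow, he]
        simp only []
        rw [zpowE q hq0 n j, inv_div]
      rw [h1, h2]
      unfold mF mG
      ring
    calc (t * x - t⁻¹ * x⁻¹) * (∑ j ∈ Finset.range (n+1), mC n j q t * (q * x) ^ e j) +
          (t⁻¹ * x - t * x⁻¹) * (∑ j ∈ Finset.range (n+1), mC n j q t * (q⁻¹ * x) ^ e j)
        = ∑ j ∈ Finset.range (n+1),
            ((t * x - t⁻¹ * x⁻¹) * (mC n j q t * (q * x) ^ e j) +
              (t⁻¹ * x - t * x⁻¹) * (mC n j q t * (q⁻¹ * x) ^ e j)) := by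
          rw [Finset.mul_sum, Finset.mul_sum, ← Finset.sum_add_distrib]
      _ = ∑ j ∈ Finset.range (n+1),
            ((mF n j q t * (x ^ e j * x) - mG n j q t * (x ^ e j * x⁻¹)) +
              (t * q ^ n + t⁻¹ * (q ^ n)⁻¹) * (mC n j q t * x ^ e j) * (x - x⁻¹)) :=
          Finset.sum_congr rfl hterm
      _ = (∑ j ∈ Finset.range (n+1), mF n j q t * (x ^ e j * x) -
            ∑ j ∈ Finset.range (n+1), mG n j q t * (x ^ e j * x⁻¹)) +
          ∑ j ∈ Finset.range (n+1),
            (t * q ^ n + t⁻¹ * (q ^ n)⁻¹) * (mC n j q t * x ^ e j) * (x - x⁻¹) := by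
          rw [Finset.sum_add_distrib, Finset.sum_sub_distrib]
      _ = (t * q ^ n + t⁻¹ * (q ^ n)⁻¹) *
            (∑ j ∈ Finset.range (n+1), mC n j q t * x ^ e j) * (x - x⁻¹) := by
          rw [hsum, sub_self, zero_add, Finset.mul_sum, Finset.sum_mul]
  linear_combination K * main
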